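/- Fix real x, y with 0 < x < 1, 0 < y < 1 and x ≠ y, and define, for real ε in a neighbourhood of 0, H(ε) = Σ_{m≥0} Σ_{n≥0} ( (m+n)! / (2+ε)_{m+n} ) x^m y^n. Then, as ε → 0, H(ε) − [ (log(1−y) − log(1−x))/(x−y) + ε·(1/(x−y))·( log(1−y) − log(1−x) + (1/2)·log(1−y)² − (1/2)·log(1−x)² − Li_2(x) + Li_2(y) ) ] = O(ε²). -/

import Mathlib

open Asymptotics

/-- The polylogarithm `Li_s(z) = Σ_{k ≥ 1} z^k / k^s`. -/
noncomputable def Li (s : ℕ) (z : ℝ) : ℝ := ∑' k : ℕ, z ^ (k + 1) / ((k : ℝ) + 1) ^ s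

open Finset

section helpers

theorem poch_eq (k : ℕ) (ε : ℝ) : (ascPochhammer ℝ k).eval (2 + ε)
    = (k+1).factorial * ∏ j ∈ range k, (1 + ε/(j+2)) := by
  induction k with
  | zero => simp
  | succ k ih =>
    rw [ascPochhammer_succ_eval, ih, prod_range_succ]
    have key : (2 + ε + (k:ℝ)) = ((k:ℝ)+2) * (1 + ε/((k:ℝ)+2)) := by
      have h2 : ((k:ℝ)+2) ≠ 0 := by positivity
      field_simp; ring
    simp only [Nat.factorial_succ]
    push_cast [key]; ring

lemma abs_prod_le (f : ℕ → ℝ) (n : ℕ) :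
    |∏ j ∈ range n, (1 + f j)| ≤ ∏ j ∈ range n, (1 + |f j|) := by
  rw [Finset.abs_prod]
  exact Finset.prod_le_prod (fun j _ => abs_nonneg _) (fun j _ => abs_add_le 1 (f j) |>.trans (by simp))

lemma prod_sub_one_abs (f : ℕ → ℝ) (n : ℕ) :
    |∏ j ∈ range n, (1 + f j) - 1| ≤ ∏ j ∈ range n, (1 + |f j|) - 1 := by
  induction n with
  | zero => simp
  | succ n ih =>
    rw [prod_range_succ, prod_range_succ]
    have h1 := abs_prod_le f n
    have h2 := abs_nonneg (f n)
    have key : (∏ j ∈ range n, (1 + f j)) * (1 + f n) - 1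
        = (∏ j ∈ range n, (1 + f j) - 1) + f n * ∏ j ∈ range n, (1 + f j) := by ring
    rw [key]
    calc _ ≤ |∏ j ∈ range n, (1 + f j) - 1| + |f n * ∏ j ∈ range n, (1 + f j)| := abs_add_le _ _
    _ ≤ (∏ j ∈ range n, (1 + |f j|) - 1) + |f n| * ∏ j ∈ range n, (1 + |f j|) := by
        rw [abs_mul]
        exact add_le_add ih (mul_le_mul_of_nonneg_left h1 h2)
    _ = _ := by ring

lemma prod_taylor_abs (f : ℕ → ℝ) (n : ℕ) :
    |∏ j ∈ range n, (1 + f j) - 1 - ∑ j ∈ range n, f j|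
      ≤ ∏ j ∈ range n, (1 + |f j|) - 1 - ∑ j ∈ range n, |f j| := by
  induction n with
  | zero => simp
  | succ n ih =>
    rw [prod_range_succ, prod_range_succ, sum_range_succ, sum_range_succ]
    have h1 := prod_sub_one_abs f n
    have h2 := abs_nonneg (f n)
    have key : (∏ j ∈ range n, (1 + f j)) * (1 + f n) - 1 - (∑ j ∈ range n, f j + f n)
        = (∏ j ∈ range n, (1 + f j) - 1 - ∑ j ∈ range n, f j)
          + f n * (∏ j ∈ range n, (1 + f j) - 1) := by ring
    rw [key]
    calc _ ≤ |∏ j ∈ range n, (1 + f j) - 1 - ∑ j ∈ range n, f j|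
            + |f n * (∏ j ∈ range n, (1 + f j) - 1)| := abs_add_le _ _
    _ ≤ (∏ j ∈ range n, (1 + |f j|) - 1 - ∑ j ∈ range n, |f j|)
            + |f n| * (∏ j ∈ range n, (1 + |f j|) - 1) := by
        rw [abs_mul]
        exact add_le_add ih (mul_le_mul_of_nonneg_left h1 h2)
    _ = _ := by ring

lemma prod_one_add_sub_one_le (g : ℕ → ℝ) (hg : ∀ j, 0 ≤ g j) (n : ℕ) :
    ∏ j ∈ range n, (1 + g j) - 1 ≤ (∑ j ∈ range n, g j) * ∏ j ∈ range n, (1 + g j) := by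
  induction n with
  | zero => simp
  | succ n ih =>
    rw [prod_range_succ, sum_range_succ]
    have hP : (0:ℝ) ≤ ∏ j ∈ range n, (1 + g j) :=
      Finset.prod_nonneg (fun j _ => by have := hg j; linarith)
    have hS : (0:ℝ) ≤ ∑ j ∈ range n, g j := Finset.sum_nonneg (fun j _ => hg j)
    have ha := hg n
    set P := ∏ j ∈ range n, (1 + g j)
    set S := ∑ j ∈ range n, g j
    have key : P * (1 + g n) - 1 = (P - 1) + g n * P := by ring
    rw [key]
    calc (P - 1) + g n * P ≤ S * P + g n * P := by linarith
    _ = (S + g n) * P := by ring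
    _ ≤ (S + g n) * (P * (1 + g n)) := by
          refine mul_le_mul_of_nonneg_left ?_ (by positivity)
          nlinarith

lemma prod_one_add_sub_one_sub_sum_le (g : ℕ → ℝ) (hg : ∀ j, 0 ≤ g j) (n : ℕ) :
    ∏ j ∈ range n, (1 + g j) - 1 - ∑ j ∈ range n, g j
      ≤ (∑ j ∈ range n, g j)^2 * ∏ j ∈ range n, (1 + g j) := by
  induction n with
  | zero => simp
  | succ n ih =>
    rw [prod_range_succ, sum_range_succ]
    have hP : (0:ℝ) ≤ ∏ j ∈ range n, (1 + g j) :=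
      Finset.prod_nonneg (fun j _ => by have := hg j; linarith)
    have hS : (0:ℝ) ≤ ∑ j ∈ range n, g j := Finset.sum_nonneg (fun j _ => hg j)
    have h1 := prod_one_add_sub_one_le g hg n
    have ha := hg n
    set P := ∏ j ∈ range n, (1 + g j)
    set S := ∑ j ∈ range n, g j
    have key : P * (1 + g n) - 1 - (S + g n) = (P - 1 - S) + g n * (P - 1) := by ring
    rw [key]
    calc (P - 1 - S) + g n * (P - 1) ≤ S^2 * P + g n * (S * P) := by
          refine add_le_add ih (mul_le_mul_of_nonneg_left (by linarith) ha)
    _ = (S^2 + g n * S) * P := by ring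
    _ ≤ (S + g n)^2 * P := by nlinarith [mul_nonneg (mul_nonneg ha hS) hP, mul_nonneg (mul_nonneg ha ha) hP]
    _ ≤ (S + g n)^2 * (P * (1 + g n)) := by
          refine mul_le_mul_of_nonneg_left ?_ (by positivity)
          nlinarith

lemma prod_telescope (k : ℕ) :
    ∏ j ∈ range k, (1 + 1/((j:ℝ)+2)) = ((k:ℝ)+2)/2 := by
  induction k with
  | zero => norm_num
  | succ k ih =>
    rw [prod_range_succ, ih]
    have h2 : ((k:ℝ)+2) ≠ 0 := by positivity
    push_cast; field_simp; ring

lemma prod_lower (k : ℕ) (ε : ℝ) (hε : |ε| ≤ 1/2) :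
    2/((k:ℝ)+2) ≤ ∏ j ∈ range k, (1 + ε/((j:ℝ)+2)) := by
  have hε1 : -(1/2) ≤ ε := by cases abs_le.mp hε; linarith
  induction k with
  | zero => norm_num
  | succ k ih =>
    rw [prod_range_succ]
    have hk : (0:ℝ) ≤ (k:ℝ) := Nat.cast_nonneg k
    have hpos : (0:ℝ) < (k:ℝ)+2 := by positivity
    have hfac : 1 - 1/(2*((k:ℝ)+2)) ≤ 1 + ε/((k:ℝ)+2) := by
      have h2 : (-(1/2):ℝ)/((k:ℝ)+2) ≤ ε/((k:ℝ)+2) := by gcongr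
      have h3 : (-(1/2):ℝ)/((k:ℝ)+2) = -(1/(2*((k:ℝ)+2))) := by
        rw [neg_div, div_div]
      linarith [h3 ▸ h2]
    have hfacpos : (0:ℝ) ≤ 1 - 1/(2*((k:ℝ)+2)) := by
      have : 1/(2*((k:ℝ)+2)) ≤ 1/2 := by
        rw [div_le_div_iff₀ (by positivity) (by norm_num)]
        linarith
      linarith
    have hPnn : (0:ℝ) ≤ ∏ j ∈ range k, (1 + ε/((j:ℝ)+2)) := le_trans (by positivity) ih
    have hmul : (2/((k:ℝ)+2)) * (1 - 1/(2*((k:ℝ)+2)))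
        ≤ (∏ j ∈ range k, (1 + ε/((j:ℝ)+2))) * (1 + ε/((k:ℝ)+2)) :=
      mul_le_mul ih hfac hfacpos hPnn
    have hstep : 2/((k:ℝ)+1+2) ≤ (2/((k:ℝ)+2)) * (1 - 1/(2*((k:ℝ)+2))) := by
      have hr : (2/((k:ℝ)+2)) * (1 - 1/(2*((k:ℝ)+2))) = (2*((k:ℝ)+2)-1)/((k:ℝ)+2)^2 := by
        field_simp
      rw [hr, div_le_div_iff₀ (by positivity) (by positivity)]
      nlinarith [hk]
    push_cast
    linarith

theorem core_est (k : ℕ) (ε : ℝ) (hε : |ε| ≤ 1/2) :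
    |(k.factorial : ℝ)/((ascPochhammer ℝ k).eval (2+ε))
      - (1 - ε * ∑ j ∈ range k, 1/((j:ℝ)+2))/((k:ℝ)+1)|
    ≤ ε^2 * ((k:ℝ)+2)^4 := by
  set s := ∑ j ∈ range k, 1/((j:ℝ)+2) with hs_def
  set P := ∏ j ∈ range k, (1 + ε/((j:ℝ)+2)) with hP_def
  set Q := ∏ j ∈ range k, (1 + |ε|/((j:ℝ)+2)) with hQ_def
  have hs0 : 0 ≤ s := Finset.sum_nonneg (fun j _ => by positivity)
  have hsk : s ≤ (k:ℝ)/2 := by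
    calc s ≤ ∑ j ∈ range k, (1/2 : ℝ) := by
          apply Finset.sum_le_sum
          intro j _
          rw [div_le_div_iff₀ (by positivity) (by norm_num)]
          have : (0:ℝ) ≤ (j:ℝ) := Nat.cast_nonneg j
          linarith
    _ = (k:ℝ)/2 := by rw [Finset.sum_const, card_range]; ring
  have habs : ∀ j : ℕ, |ε/((j:ℝ)+2)| = |ε|/((j:ℝ)+2) := by
    intro j; rw [abs_div, abs_of_pos (by positivity : (0:ℝ) < (j:ℝ)+2)]
  have hsumabs : ∑ j ∈ range k, |ε|/((j:ℝ)+2) = |ε| * s := by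
    rw [hs_def, Finset.mul_sum]
    exact Finset.sum_congr rfl (fun j _ => by rw [mul_one_div])
  have hQnn : 0 ≤ Q := Finset.prod_nonneg (fun j _ => by positivity)
  have hQle : Q ≤ ((k:ℝ)+2)/2 := by
    rw [← prod_telescope k]
    apply Finset.prod_le_prod (fun j _ => by positivity)
    intro j _
    have : |ε|/((j:ℝ)+2) ≤ 1/((j:ℝ)+2) := by
      gcongr
      exact le_trans hε (by norm_num)
    linarith
  have hD : |P - 1 - ε*s| ≤ (|ε| * s)^2 * Q := by
    have h1 := prod_taylor_abs (fun j => ε/((j:ℝ)+2)) k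
    simp only [habs] at h1
    rw [hsumabs] at h1
    have h2 := prod_one_add_sub_one_sub_sum_le (fun j => |ε|/((j:ℝ)+2)) (fun j => by positivity) k
    rw [hsumabs] at h2
    have hεs : ∑ j ∈ range k, ε/((j:ℝ)+2) = ε * s := by
      rw [hs_def, Finset.mul_sum]
      exact Finset.sum_congr rfl (fun j _ => by rw [mul_one_div])
    rw [hεs] at h1
    calc |P - 1 - ε*s| ≤ Q - 1 - |ε| * s := h1
    _ ≤ (|ε| * s)^2 * Q := h2
  have hP1 : |P - 1| ≤ |ε| * s * Q := by
    have h1 := prod_sub_one_abs (fun j => ε/((j:ℝ)+2)) k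
    simp only [habs] at h1
    have h2 := prod_one_add_sub_one_le (fun j => |ε|/((j:ℝ)+2)) (fun j => by positivity) k
    rw [hsumabs] at h2
    calc |P - 1| ≤ Q - 1 := h1
    _ ≤ |ε| * s * Q := h2
  have hPlow := prod_lower k ε hε
  have hPpos : 0 < P := lt_of_lt_of_le (by positivity) hPlow
  have hN : |1 - (1-ε*s)*P| ≤ ε^2*s^2*((k:ℝ)+2) := by
    have key : 1 - (1-ε*s)*P = -(P - 1 - ε*s) + (ε*s)*(P-1) := by ring
    rw [key]
    have hεabs : |ε*s| = |ε| * s := by rw [abs_mul, abs_of_nonneg hs0]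
    calc |-(P - 1 - ε*s) + (ε*s)*(P-1)| ≤ |-(P - 1 - ε*s)| + |(ε*s)*(P-1)| := abs_add_le _ _
    _ = |P - 1 - ε*s| + |ε*s| * |P-1| := by rw [abs_neg, abs_mul]
    _ ≤ (|ε| * s)^2 * Q + (|ε| * s)*(|ε| * s * Q) := by
        refine add_le_add hD ?_
        rw [hεabs]
        exact mul_le_mul_of_nonneg_left hP1 (by positivity)
    _ = 2*(|ε| * s)^2*Q := by ring
    _ ≤ 2*(|ε| * s)^2*(((k:ℝ)+2)/2) := by
        refine mul_le_mul_of_nonneg_left hQle (by positivity)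
    _ = ε^2*s^2*((k:ℝ)+2) := by rw [mul_pow, sq_abs]; ring
  have hk1 : (0:ℝ) < (k:ℝ)+1 := by positivity
  have heq : (k.factorial : ℝ)/((ascPochhammer ℝ k).eval (2+ε)) - (1 - ε*s)/((k:ℝ)+1)
      = (1 - (1-ε*s)*P) / (((k:ℝ)+1)*P) := by
    rw [poch_eq k ε]
    have hfs : ((k+1).factorial:ℝ) = ((k:ℝ)+1) * k.factorial := by
      rw [Nat.factorial_succ]; push_cast; ring
    rw [hfs, ← hP_def]
    have hf0 : (k.factorial:ℝ) ≠ 0 := Nat.cast_ne_zero.mpr k.factorial_ne_zero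
    field_simp
  rw [heq, abs_div, abs_of_pos (by positivity : (0:ℝ) < ((k:ℝ)+1)*P)]
  rw [div_le_iff₀ (by positivity)]
  have hkc : (0:ℝ) ≤ (k:ℝ) := Nat.cast_nonneg k
  have hfin : ε^2*s^2*((k:ℝ)+2) ≤ ε ^ 2 * ((k:ℝ) + 2) ^ 4 * (((k:ℝ) + 1) * P) := by
    have h1 : ε ^ 2 * ((k:ℝ) + 2) ^ 4 * (((k:ℝ) + 1) * (2/((k:ℝ)+2)))
        ≤ ε ^ 2 * ((k:ℝ) + 2) ^ 4 * (((k:ℝ) + 1) * P) := by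
      refine mul_le_mul_of_nonneg_left ?_ (by positivity)
      exact mul_le_mul_of_nonneg_left hPlow (by positivity)
    refine le_trans ?_ h1
    have h2 : ε ^ 2 * ((k:ℝ) + 2) ^ 4 * (((k:ℝ) + 1) * (2/((k:ℝ)+2)))
        = 2 * ε^2 * ((k:ℝ)+2)^3 * ((k:ℝ)+1) := by
      field_simp
    rw [h2]
    have hs2 : s^2 ≤ (k:ℝ)^2/4 := by nlinarith
    have h3 : ε^2*s^2*((k:ℝ)+2) ≤ ε^2*((k:ℝ)^2/4)*((k:ℝ)+2) := by
      apply mul_le_mul_of_nonneg_right ?_ (by positivity)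
      exact mul_le_mul_of_nonneg_left hs2 (sq_nonneg ε)
    have hpoly : (k:ℝ)^2/4*((k:ℝ)+2) ≤ 2*((k:ℝ)+2)^3*((k:ℝ)+1) := by nlinarith [hkc, sq_nonneg (k:ℝ)]
    have h4 := mul_le_mul_of_nonneg_left hpoly (sq_nonneg ε)
    linarith [h3, h4]
  exact le_trans hN hfin

end helpers

section series
variable {x : ℝ} (hx0 : 0 < x) (hx1 : x < 1)
include hx0 hx1

lemma hasSum_L : HasSum (fun k : ℕ => x^(k+1)/((k:ℝ)+1)) (-Real.log (1-x)) :=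
  Real.hasSum_pow_div_log_of_abs_lt_one (by rw [abs_of_pos hx0]; exact hx1)

lemma summable_li2 : Summable (fun k : ℕ => x^(k+1)/((k:ℝ)+1)^2) := by
  apply Summable.of_nonneg_of_le (fun k => by positivity) (fun k => ?_)
    (summable_geometric_of_lt_one hx0.le hx1 |>.mul_left x)
  have h1 : (1:ℝ) ≤ ((k:ℝ)+1)^2 := by nlinarith [Nat.cast_nonneg (α := ℝ) k]
  calc x^(k+1)/((k:ℝ)+1)^2 ≤ x^(k+1)/1 := by gcongr
  _ = x * x^k := by rw [div_one, pow_succ]; ring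

lemma hasSum_Li2 : HasSum (fun k : ℕ => x^(k+1)/((k:ℝ)+1)^2) (Li 2 x) := by
  have := (summable_li2 hx0 hx1).hasSum
  simpa [Li] using this

lemma hasSum_M : HasSum (fun k : ℕ => (∑ j ∈ range (k+1), 1/((j:ℝ)+1)) * x^(k+1)/((k:ℝ)+1))
    (Real.log (1-x)^2/2 + Li 2 x) := by
  set L := -Real.log (1-x) with hL
  set f : ℕ → ℝ := fun i => x^(i+1)/((i:ℝ)+1) with hf_def
  have hfnn : ∀ i, 0 ≤ f i := fun i => by positivity
  have hfsum : Summable f := (hasSum_L hx0 hx1).summable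
  have hfn : Summable fun i => ‖f i‖ := by
    simpa [Real.norm_eq_abs, abs_of_nonneg (hfnn _)] using hfsum
  have hgsum : Summable (fun n => ∑ kl ∈ Finset.HasAntidiagonal.antidiagonal n, f kl.1 * f kl.2) :=
    summable_sum_mul_antidiagonal_of_summable_mul (summable_mul_of_summable_norm hfn hfn)
  have hgval : HasSum (fun n => ∑ kl ∈ Finset.HasAntidiagonal.antidiagonal n, f kl.1 * f kl.2) (L*L) := by
    rw [hgsum.hasSum_iff]
    rw [← tsum_mul_tsum_eq_tsum_sum_antidiagonal_of_summable_norm hfn hfn]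
    rw [(hasSum_L hx0 hx1).tsum_eq]
  have key : ∀ n : ℕ, (∑ kl ∈ Finset.HasAntidiagonal.antidiagonal n, f kl.1 * f kl.2)
      = 2 * (∑ j ∈ range (n+1), 1/((j:ℝ)+1)) * x^(n+2)/((n:ℝ)+2) := by
    intro n
    rw [Finset.Nat.sum_antidiagonal_eq_sum_range_succ_mk]
    have e1 : ∀ i ∈ range (n+1), f i * f (n - i)
        = x^(n+2) * (1/((n:ℝ)+2)) * (1/((i:ℝ)+1) + 1/(((n-i : ℕ):ℝ)+1)) := by
      intro i hi
      have hin : i ≤ n := Nat.lt_succ_iff.mp (mem_range.mp hi)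
      have hexp : (i+1) + (n-i+1) = n+2 := by omega
      have hc : ((n-i : ℕ):ℝ) = (n:ℝ) - (i:ℝ) := by
        rw [Nat.cast_sub hin]
      simp only [hf_def]
      rw [div_mul_div_comm, ← pow_add, hexp, hc]
      have hile : (i:ℝ) ≤ (n:ℝ) := by exact_mod_cast hin
      have h1 : ((i:ℝ)+1) ≠ 0 := by positivity
      have h2 : ((n:ℝ)-(i:ℝ)+1) ≠ 0 := by intro h; nlinarith
      have h3 : ((n:ℝ)+2) ≠ 0 := by positivity
      field_simp
      ring
    rw [Finset.sum_congr rfl e1, ← Finset.mul_sum, Finset.sum_add_distrib]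
    have e2 : ∑ i ∈ range (n+1), 1/(((n-i : ℕ):ℝ)+1) = ∑ i ∈ range (n+1), 1/((i:ℝ)+1) := by
      rw [← Finset.sum_range_reflect (fun j => 1/((j:ℝ)+1)) (n+1)]
      exact Finset.sum_congr rfl (fun i hi => by norm_num)
    rw [e2]
    ring
  have hgval2 : HasSum (fun n : ℕ => (∑ j ∈ range (n+1), 1/((j:ℝ)+1)) * x^(n+2)/((n:ℝ)+2))
      (L*L/2) := by
    have h2 := hgval.div_const 2
    have e : (fun n => (∑ kl ∈ Finset.HasAntidiagonal.antidiagonal n, f kl.1 * f kl.2) / 2)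
        = (fun n : ℕ => (∑ j ∈ range (n+1), 1/((j:ℝ)+1)) * x^(n+2)/((n:ℝ)+2)) := by
      funext n; rw [key n]; ring
    rwa [e] at h2
  -- Li2 shifted
  have hLi2' : HasSum (fun n : ℕ => x^(n+2)/((n:ℝ)+2)^2) (Li 2 x - x) := by
    have h := hasSum_Li2 hx0 hx1
    have h2 := (hasSum_nat_add_iff' (f := fun k : ℕ => x^(k+1)/((k:ℝ)+1)^2) 1).mpr h
    have e : (fun n : ℕ => x^(n+1+1)/(((n+1:ℕ):ℝ)+1)^2)
        = (fun n : ℕ => x^(n+2)/((n:ℝ)+2)^2) := by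
      funext n; push_cast; ring_nf
    have e2 : Li 2 x - ∑ i ∈ range 1, x^(i+1)/((i:ℝ)+1)^2 = Li 2 x - x := by
      simp
    rw [e2] at h2
    rwa [e] at h2
  -- combine and unshift
  have hcomb : HasSum (fun n : ℕ =>
      (∑ j ∈ range (n+1+1), 1/((j:ℝ)+1)) * x^(n+1+1)/(((n+1:ℕ):ℝ)+1))
      (L*L/2 + (Li 2 x - x)) := by
    have hadd := hgval2.add hLi2'
    have e : (fun n : ℕ => (∑ j ∈ range (n+1+1), 1/((j:ℝ)+1)) * x^(n+1+1)/(((n+1:ℕ):ℝ)+1))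
        = (fun n : ℕ => (∑ j ∈ range (n+1), 1/((j:ℝ)+1)) * x^(n+2)/((n:ℝ)+2)
          + x^(n+2)/((n:ℝ)+2)^2) := by
      funext n
      rw [Finset.sum_range_succ]
      have h3 : ((n:ℝ)+2) ≠ 0 := by positivity
      push_cast
      field_simp
      ring
    rwa [← e] at hadd
  have hfin := (hasSum_nat_add_iff (f := fun k : ℕ =>
      (∑ j ∈ range (k+1), 1/((j:ℝ)+1)) * x^(k+1)/((k:ℝ)+1)) 1).mp hcomb
  have e0 : ∑ i ∈ range 1, (∑ j ∈ range (i+1), 1/((j:ℝ)+1)) * x^(i+1)/((i:ℝ)+1) = x := by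
    simp
  rw [e0] at hfin
  have eL : L*L/2 + (Li 2 x - x) + x = Real.log (1-x)^2/2 + Li 2 x := by
    rw [hL]; ring
  rwa [eL] at hfin

omit hx0 hx1 in
lemma s_eq (n : ℕ) : ∑ j ∈ range n, 1/((j:ℝ)+2)
    = (∑ j ∈ range (n+1), 1/((j:ℝ)+1)) - 1 := by
  rw [Finset.sum_range_succ' (fun j => 1/((j:ℝ)+1)) n]
  have e : ∀ j ∈ range n, 1/(((j+1:ℕ):ℝ)+1) = 1/((j:ℝ)+2) := fun j _ => by push_cast; ring_nf
  rw [Finset.sum_congr rfl e]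
  norm_num

lemma hasSum_K : HasSum (fun n : ℕ => (∑ j ∈ range n, 1/((j:ℝ)+2)) * x^(n+1)/((n:ℝ)+1))
    (Real.log (1-x)^2/2 + Li 2 x + Real.log (1-x)) := by
  have h := (hasSum_M hx0 hx1).sub (hasSum_L hx0 hx1)
  have e : (fun n : ℕ => (∑ j ∈ range (n+1), 1/((j:ℝ)+1)) * x^(n+1)/((n:ℝ)+1)
        - x^(n+1)/((n:ℝ)+1))
      = (fun n : ℕ => (∑ j ∈ range n, 1/((j:ℝ)+2)) * x^(n+1)/((n:ℝ)+1)) := by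
    funext n
    rw [s_eq n]
    ring
  rw [e] at h
  have e2 : Real.log (1-x)^2/2 + Li 2 x - -Real.log (1-x)
      = Real.log (1-x)^2/2 + Li 2 x + Real.log (1-x) := by ring
  rwa [e2] at h

end series

section pairs

lemma tsum_prod_diag (G : ℕ×ℕ → ℝ) (hG : Summable G) :
    ∑' p : ℕ×ℕ, G p = ∑' n : ℕ, ∑ kl ∈ Finset.HasAntidiagonal.antidiagonal n, G kl := by
  rw [← Finset.HasAntidiagonal.sigmaAntidiagonalEquivProd.tsum_eq G]
  have hs : Summable (fun z : Σ n : ℕ, Finset.HasAntidiagonal.antidiagonal n =>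
      G (Finset.HasAntidiagonal.sigmaAntidiagonalEquivProd z)) :=
    Finset.HasAntidiagonal.sigmaAntidiagonalEquivProd.summable_iff.mpr hG
  rw [Summable.tsum_sigma hs]
  congr 1
  funext n
  rw [tsum_fintype]
  simp only [Finset.HasAntidiagonal.sigmaAntidiagonalEquivProd, Equiv.coe_fn_mk]
  exact Finset.sum_attach _ _

lemma row_eq (x y : ℝ) (hxy : x ≠ y) (c : ℕ → ℝ) (n : ℕ) :
    ∑ kl ∈ Finset.HasAntidiagonal.antidiagonal n, c (kl.1+kl.2) * x^kl.1 * y^kl.2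
      = c n * ((x^(n+1) - y^(n+1))/(x-y)) := by
  have h1 : ∀ kl ∈ Finset.HasAntidiagonal.antidiagonal n, c (kl.1+kl.2) * x^kl.1 * y^kl.2
      = c n * (x^kl.1 * y^kl.2) := by
    intro kl h
    rw [Finset.HasAntidiagonal.mem_antidiagonal] at h
    rw [h]; ring
  rw [Finset.sum_congr rfl h1, ← Finset.mul_sum]
  congr 1
  rw [eq_div_iff (sub_ne_zero.mpr hxy)]
  rw [Finset.Nat.sum_antidiagonal_eq_sum_range_succ_mk]
  have := geom_sum₂_mul x y (n+1)
  rw [← this]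
  congr 1

set_option maxHeartbeats 1000000 in
lemma summable_w {x y : ℝ} (hx0 : 0 < x) (hx1 : x < 1) (hy0 : 0 < y) (hy1 : y < 1) :
    Summable (fun p : ℕ×ℕ => (((p.1+p.2 : ℕ):ℝ)+2)^4 * x^p.1 * y^p.2) := by
  have hone : ∀ {z : ℝ}, 0 < z → z < 1 → Summable (fun m : ℕ => ((m:ℝ)+2)^4 * z^m) := by
    intro z hz0 hz1
    have h1 : Summable (fun n : ℕ => (n:ℝ)^4 * z^n) :=
      summable_pow_mul_geometric_of_norm_lt_one 4 (by rw [Real.norm_eq_abs, abs_of_pos hz0]; exact hz1)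
    have h2 : Summable (fun n : ℕ => (((n+2:ℕ)):ℝ)^4 * z^(n+2)) :=
      (summable_nat_add_iff 2).mpr h1
    have h3 := h2.mul_left ((z^2)⁻¹)
    apply h3.congr
    intro n
    have hz : z ≠ 0 := ne_of_gt hz0
    push_cast
    field_simp
    ring
  have hp : Summable (fun p : ℕ×ℕ => (((p.1:ℝ)+2)^4 * x^p.1) * (((p.2:ℝ)+2)^4 * y^p.2)) :=
    (hone hx0 hx1).mul_of_nonneg (hone hy0 hy1)
      (fun m => by positivity) (fun n => by positivity)
  apply Summable.of_nonneg_of_le (fun p => by positivity) ?_ hp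
  intro p
  have hkey : (((p.1+p.2 : ℕ):ℝ)+2)^4 ≤ ((p.1:ℝ)+2)^4 * ((p.2:ℝ)+2)^4 := by
    rw [← mul_pow]
    have h1 : (((p.1+p.2 : ℕ):ℝ)+2) ≤ ((p.1:ℝ)+2) * ((p.2:ℝ)+2) := by
      push_cast
      nlinarith [Nat.cast_nonneg (α := ℝ) p.1, Nat.cast_nonneg (α := ℝ) p.2]
    have h0 : (0:ℝ) ≤ (((p.1+p.2 : ℕ):ℝ)+2) := by positivity
    exact pow_le_pow_left₀ h0 h1 4
  calc (((p.1+p.2 : ℕ):ℝ)+2)^4 * x^p.1 * y^p.2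
      ≤ ((p.1:ℝ)+2)^4 * ((p.2:ℝ)+2)^4 * x^p.1 * y^p.2 := by
        have : (0:ℝ) ≤ x^p.1 * y^p.2 := by positivity
        nlinarith [hkey, this]
  _ = (((p.1:ℝ)+2)^4 * x^p.1) * (((p.2:ℝ)+2)^4 * y^p.2) := by ring

end pairs

set_option maxHeartbeats 2000000 in
/-- The ε-expansion of the Appell value `H(ε) = F₁(1; 1, 1; 2+ε; x, y)` up to order `ε`:
`H(ε) = (log(1-y)-log(1-x))/(x-y) + ε(1/(x-y))(log(1-y)-log(1-x)
  + ½log(1-y)² - ½log(1-x)² - Li₂(x) + Li₂(y)) + O(ε²)` as `ε → 0`. -/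
theorem stmt19 (x y : ℝ) (hx0 : 0 < x) (hx1 : x < 1) (hy0 : 0 < y) (hy1 : y < 1)
    (hxy : x ≠ y) :
    (fun ε : ℝ =>
        (∑' mn : ℕ × ℕ,
          ((mn.1 + mn.2).factorial : ℝ) / (ascPochhammer ℝ (mn.1 + mn.2)).eval (2 + ε) *
            x ^ mn.1 * y ^ mn.2) -
        ((Real.log (1 - y) - Real.log (1 - x)) / (x - y) +
          ε * (1 / (x - y)) *
            (Real.log (1 - y) - Real.log (1 - x) + (1 / 2) * Real.log (1 - y) ^ 2 -
              (1 / 2) * Real.log (1 - x) ^ 2 - Li 2 x + Li 2 y)))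
      =O[nhds 0] fun ε : ℝ => ε ^ 2 := by
  have hxys : x - y ≠ 0 := sub_ne_zero.mpr hxy
  set u : ℕ×ℕ → ℝ := fun p => 1/(((p.1+p.2 : ℕ):ℝ)+1) * x^p.1 * y^p.2 with hu_def
  set v : ℕ×ℕ → ℝ := fun p =>
    (∑ j ∈ range (p.1+p.2), 1/((j:ℝ)+2))/(((p.1+p.2 : ℕ):ℝ)+1) * x^p.1 * y^p.2 with hv_def
  set w : ℕ×ℕ → ℝ := fun p => (((p.1+p.2 : ℕ):ℝ)+2)^4 * x^p.1 * y^p.2 with hw_def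
  have hw : Summable w := summable_w hx0 hx1 hy0 hy1
  have hw0 : ∀ p : ℕ×ℕ, 0 ≤ w p := fun p => by rw [hw_def]; positivity
  have hu0 : ∀ p : ℕ×ℕ, 0 ≤ u p := fun p => by rw [hu_def]; positivity
  have hsnn : ∀ k : ℕ, 0 ≤ ∑ j ∈ range k, 1/((j:ℝ)+2) :=
    fun k => Finset.sum_nonneg (fun j _ => by positivity)
  have hslek : ∀ k : ℕ, (∑ j ∈ range k, 1/((j:ℝ)+2)) ≤ (k:ℝ) := by
    intro k
    calc (∑ j ∈ range k, 1/((j:ℝ)+2)) ≤ ∑ j ∈ range k, (1:ℝ) := by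
          apply Finset.sum_le_sum
          intro j _
          rw [div_le_one (by positivity)]
          linarith [Nat.cast_nonneg (α := ℝ) j]
    _ = (k:ℝ) := by rw [Finset.sum_const, card_range]; simp
  have hv0 : ∀ p : ℕ×ℕ, 0 ≤ v p := fun p => by
    rw [hv_def]
    have := hsnn (p.1+p.2)
    positivity
  have hpow1 : ∀ k : ℕ, (1:ℝ) ≤ ((k:ℝ)+2)^4 := by
    intro k
    have hk := Nat.cast_nonneg (α := ℝ) k
    have h1 : (1:ℝ) ≤ (k:ℝ)+2 := by linarith
    calc (1:ℝ) = 1^4 := by norm_num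
    _ ≤ ((k:ℝ)+2)^4 := pow_le_pow_left₀ (by norm_num) h1 4
  have huw : ∀ p : ℕ×ℕ, u p ≤ w p := by
    intro p
    rw [hu_def, hw_def]
    have h1 : 1/(((p.1+p.2 : ℕ):ℝ)+1) ≤ (((p.1+p.2 : ℕ):ℝ)+2)^4 := by
      refine le_trans ?_ (hpow1 _)
      rw [div_le_one (by positivity)]
      linarith [Nat.cast_nonneg (α := ℝ) (p.1+p.2)]
    have hx' : (0:ℝ) ≤ x^p.1 := by positivity
    have hy' : (0:ℝ) ≤ y^p.2 := by positivity
    exact mul_le_mul_of_nonneg_right (mul_le_mul_of_nonneg_right h1 hx') hy'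
  have hvw : ∀ p : ℕ×ℕ, v p ≤ w p := by
    intro p
    rw [hv_def, hw_def]
    have h1 : (∑ j ∈ range (p.1+p.2), 1/((j:ℝ)+2))/(((p.1+p.2 : ℕ):ℝ)+1)
        ≤ (((p.1+p.2 : ℕ):ℝ)+2)^4 := by
      refine le_trans ?_ (hpow1 _)
      rw [div_le_one (by positivity)]
      refine le_trans (hslek _) (by linarith)
    have hx' : (0:ℝ) ≤ x^p.1 := by positivity
    have hy' : (0:ℝ) ≤ y^p.2 := by positivity
    exact mul_le_mul_of_nonneg_right (mul_le_mul_of_nonneg_right h1 hx') hy'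
  have hu : Summable u := Summable.of_nonneg_of_le hu0 huw hw
  have hv : Summable v := Summable.of_nonneg_of_le hv0 hvw hw
  -- pointwise remainder bound
  have habs : ∀ ε : ℝ, |ε| ≤ 1/2 → ∀ p : ℕ×ℕ,
      |((p.1+p.2).factorial : ℝ)/((ascPochhammer ℝ (p.1+p.2)).eval (2+ε)) * x^p.1 * y^p.2
        - (u p - ε*v p)| ≤ ε^2 * w p := by
    intro ε hε p
    have hc := core_est (p.1+p.2) ε hε
    have hxyp : (0:ℝ) ≤ x^p.1*y^p.2 := by positivity
    have key : ((p.1+p.2).factorial : ℝ)/((ascPochhammer ℝ (p.1+p.2)).eval (2+ε)) * x^p.1 * y^p.2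
        - (u p - ε*v p)
        = (((p.1+p.2).factorial : ℝ)/((ascPochhammer ℝ (p.1+p.2)).eval (2+ε))
            - (1 - ε*∑ j ∈ range (p.1+p.2), 1/((j:ℝ)+2))/(((p.1+p.2 : ℕ):ℝ)+1)) * (x^p.1*y^p.2) := by
      rw [hu_def, hv_def]
      ring
    rw [key, abs_mul, abs_of_nonneg hxyp]
    calc _ ≤ (ε^2*(((p.1+p.2 : ℕ):ℝ)+2)^4) * (x^p.1*y^p.2) :=
          mul_le_mul_of_nonneg_right hc hxyp
    _ = ε^2 * w p := by rw [hw_def]; ring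
  -- summability of the main family
  have hsummA : ∀ ε : ℝ, |ε| ≤ 1/2 → Summable (fun p : ℕ×ℕ =>
      ((p.1+p.2).factorial : ℝ)/((ascPochhammer ℝ (p.1+p.2)).eval (2+ε)) * x^p.1 * y^p.2) := by
    intro ε hε
    have hbd : Summable (fun p : ℕ×ℕ => u p + v p + w p) := (hu.add hv).add hw
    apply Summable.of_nonneg_of_le ?_ ?_ hbd
    · intro p
      have hev : 0 < (ascPochhammer ℝ (p.1+p.2)).eval (2+ε) := by
        rw [poch_eq]
        apply mul_pos
        · exact_mod_cast Nat.factorial_pos _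
        · exact lt_of_lt_of_le (by positivity) (prod_lower (p.1+p.2) ε hε)
      have h1 : (0:ℝ) ≤ ((p.1+p.2).factorial : ℝ) := Nat.cast_nonneg _
      have hx' : (0:ℝ) ≤ x^p.1 := by positivity
      have hy' : (0:ℝ) ≤ y^p.2 := by positivity
      exact mul_nonneg (mul_nonneg (div_nonneg h1 hev.le) hx') hy'
    · intro p
      have h := (abs_le.mp (habs ε hε p)).2
      have hvp := hv0 p
      have hε1 : |ε| ≤ 1 := le_trans hε (by norm_num)
      have hmv : |ε| * v p ≤ v p := by
        have := mul_le_mul_of_nonneg_right hε1 hvp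
        simpa using this
      have hεv : -(ε * v p) ≤ v p :=
        le_trans (neg_le_abs _) (by rw [abs_mul, abs_of_nonneg hvp]; exact hmv)
      have hsq : ε^2 ≤ 1 := by
        rw [← sq_abs]
        calc |ε|^2 ≤ (1/2:ℝ)^2 := pow_le_pow_left₀ (abs_nonneg ε) hε 2
        _ ≤ 1 := by norm_num
      have hε2 : ε^2 * w p ≤ w p := by
        have := mul_le_mul_of_nonneg_right hsq (hw0 p)
        simpa using this
      linarith
  -- the key uniform estimate
  have hkey : ∀ ε : ℝ, |ε| ≤ 1/2 →
      |(∑' p : ℕ×ℕ, ((p.1+p.2).factorial : ℝ)/((ascPochhammer ℝ (p.1+p.2)).eval (2+ε))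
          * x^p.1 * y^p.2) - ((∑' p, u p) - ε * ∑' p, v p)|
        ≤ (∑' p, w p) * ε^2 := by
    intro ε hε
    have hA := hsummA ε hε
    have huv : Summable (fun p => u p - ε * v p) := hu.sub (hv.mul_left ε)
    have hDsum : Summable (fun p : ℕ×ℕ =>
        ((p.1+p.2).factorial : ℝ)/((ascPochhammer ℝ (p.1+p.2)).eval (2+ε)) * x^p.1 * y^p.2
          - (u p - ε * v p)) := hA.sub huv
    have htsumD : (∑' p : ℕ×ℕ, (((p.1+p.2).factorial : ℝ)/((ascPochhammer ℝ (p.1+p.2)).eval (2+ε))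
          * x^p.1 * y^p.2 - (u p - ε * v p)))
        = (∑' p : ℕ×ℕ, ((p.1+p.2).factorial : ℝ)/((ascPochhammer ℝ (p.1+p.2)).eval (2+ε))
          * x^p.1 * y^p.2) - ((∑' p, u p) - ε * ∑' p, v p) := by
      rw [Summable.tsum_sub hA huv, Summable.tsum_sub hu (hv.mul_left ε), tsum_mul_left]
    rw [← htsumD]
    have h1 : ∀ p : ℕ×ℕ, ‖((p.1+p.2).factorial : ℝ)/((ascPochhammer ℝ (p.1+p.2)).eval (2+ε))
        * x^p.1 * y^p.2 - (u p - ε * v p)‖ ≤ ε^2 * w p := by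
      intro p
      rw [Real.norm_eq_abs]
      exact habs ε hε p
    have hDn : Summable (fun p : ℕ×ℕ => ‖((p.1+p.2).factorial : ℝ)/((ascPochhammer ℝ (p.1+p.2)).eval (2+ε))
        * x^p.1 * y^p.2 - (u p - ε * v p)‖) :=
      Summable.of_nonneg_of_le (fun p => norm_nonneg _) h1 (hw.mul_left _)
    calc |∑' p : ℕ×ℕ, (((p.1+p.2).factorial : ℝ)/((ascPochhammer ℝ (p.1+p.2)).eval (2+ε))
          * x^p.1 * y^p.2 - (u p - ε * v p))|
        ≤ ∑' p : ℕ×ℕ, ‖((p.1+p.2).factorial : ℝ)/((ascPochhammer ℝ (p.1+p.2)).eval (2+ε))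
          * x^p.1 * y^p.2 - (u p - ε * v p)‖ := by
          rw [← Real.norm_eq_abs]
          exact norm_tsum_le_tsum_norm hDn
    _ ≤ ∑' p : ℕ×ℕ, ε^2 * w p := Summable.tsum_le_tsum h1 hDn (hw.mul_left _)
    _ = ε^2 * ∑' p, w p := tsum_mul_left
    _ = (∑' p, w p) * ε^2 := by ring
  -- values of the two series
  have hUval : (∑' p, u p) = (Real.log (1-y) - Real.log (1-x))/(x-y) := by
    rw [tsum_prod_diag u hu]
    have hrowu : ∀ n : ℕ, ∑ kl ∈ Finset.HasAntidiagonal.antidiagonal n, u kl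
        = (fun k : ℕ => 1/((k:ℝ)+1)) n * ((x^(n+1)-y^(n+1))/(x-y)) :=
      fun n => row_eq x y hxy (fun k : ℕ => 1/((k:ℝ)+1)) n
    rw [tsum_congr hrowu]
    have hs : HasSum (fun n : ℕ => (fun k : ℕ => 1/((k:ℝ)+1)) n * ((x^(n+1)-y^(n+1))/(x-y)))
        ((-Real.log (1-x) - -Real.log (1-y))/(x-y)) := by
      have h := ((hasSum_L hx0 hx1).sub (hasSum_L hy0 hy1)).div_const (x-y)
      have e : (fun n : ℕ => (x^(n+1)/((n:ℝ)+1) - y^(n+1)/((n:ℝ)+1))/(x-y))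
          = (fun n : ℕ => (fun k : ℕ => 1/((k:ℝ)+1)) n * ((x^(n+1)-y^(n+1))/(x-y))) := by
        funext n; simp only; ring
      rwa [e] at h
    rw [hs.tsum_eq]
    ring
  have hVval : (∑' p, v p) = ((Real.log (1-x)^2/2 + Li 2 x + Real.log (1-x))
      - (Real.log (1-y)^2/2 + Li 2 y + Real.log (1-y)))/(x-y) := by
    rw [tsum_prod_diag v hv]
    have hrowv : ∀ n : ℕ, ∑ kl ∈ Finset.HasAntidiagonal.antidiagonal n, v kl
        = (fun k : ℕ => (∑ j ∈ range k, 1/((j:ℝ)+2))/((k:ℝ)+1)) n * ((x^(n+1)-y^(n+1))/(x-y)) :=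
      fun n => row_eq x y hxy (fun k : ℕ => (∑ j ∈ range k, 1/((j:ℝ)+2))/((k:ℝ)+1)) n
    rw [tsum_congr hrowv]
    have hs : HasSum (fun n : ℕ =>
        (fun k : ℕ => (∑ j ∈ range k, 1/((j:ℝ)+2))/((k:ℝ)+1)) n * ((x^(n+1)-y^(n+1))/(x-y)))
        (((Real.log (1-x)^2/2 + Li 2 x + Real.log (1-x))
          - (Real.log (1-y)^2/2 + Li 2 y + Real.log (1-y)))/(x-y)) := by
      have h := ((hasSum_K hx0 hx1).sub (hasSum_K hy0 hy1)).div_const (x-y)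
      have e : (fun n : ℕ => ((∑ j ∈ range n, 1/((j:ℝ)+2)) * x^(n+1)/((n:ℝ)+1)
            - (∑ j ∈ range n, 1/((j:ℝ)+2)) * y^(n+1)/((n:ℝ)+1))/(x-y))
          = (fun n : ℕ =>
            (fun k : ℕ => (∑ j ∈ range k, 1/((j:ℝ)+2))/((k:ℝ)+1)) n * ((x^(n+1)-y^(n+1))/(x-y))) := by
        funext n; simp only; ring
      rwa [e] at h
    rw [hs.tsum_eq]
  -- conclude
  rw [Asymptotics.isBigO_iff]
  refine ⟨∑' p, w p, ?_⟩
  have hev : ∀ᶠ ε : ℝ in nhds 0, |ε| ≤ 1/2 := by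
    have hball : Metric.ball (0:ℝ) (1/2) ∈ nhds 0 := Metric.ball_mem_nhds _ (by norm_num)
    filter_upwards [hball] with ε hε
    rw [Metric.mem_ball, Real.dist_eq, sub_zero] at hε
    exact hε.le
  filter_upwards [hev] with ε hε
  have hexpr : (Real.log (1 - y) - Real.log (1 - x)) / (x - y) +
          ε * (1 / (x - y)) *
            (Real.log (1 - y) - Real.log (1 - x) + (1 / 2) * Real.log (1 - y) ^ 2 -
              (1 / 2) * Real.log (1 - x) ^ 2 - Li 2 x + Li 2 y)
      = (∑' p, u p) - ε * ∑' p, v p := by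
    rw [hUval, hVval]
    ring
  rw [hexpr, Real.norm_eq_abs, Real.norm_eq_abs, abs_of_nonneg (sq_nonneg ε)]
  exact hkey ε hε
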